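/- Every Nikodym set B in F_q^2 satisfies |B| >= min( q^2 - floor(q/3)(q-1) - 2q , 3*floor(q/3)*(q - 1 - floor(q/3)) ). -/

import Mathlib

def line {n : ℕ} {F : Type} [Field F] (a v : Fin n → F) : Set (Fin n → F) :=
  {y | ∃ t : F, y = a + t • v}

def IsNikodym {n : ℕ} {F : Type} [Field F] (B : Set (Fin n → F)) : Prop :=
  ∀ x ∉ B, ∃ a v : Fin n → F, v ≠ 0 ∧ line a v ∩ Bᶜ = {x}

section helpers
variable {F : Type} [Field F]

def dvec (d : Option F) : Fin 2 → F := d.elim ![1, 0] (fun s => ![s, 1])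

def lphi (d : Option F) (p : Fin 2 → F) : F := d.elim (p 1) (fun s => p 0 - s * p 1)

lemma dvec_ne_zero (d : Option F) : dvec d ≠ 0 := by
  cases d with
  | none => intro h; have := congrFun h 0; simp [dvec] at this
  | some s => intro h; have := congrFun h 1; simp [dvec] at this

lemma mem_line_dvec {x y : Fin 2 → F} {d : Option F} :
    y ∈ line x (dvec d) ↔ lphi d y = lphi d x := by
  cases d with
  | none =>
    constructor
    · rintro ⟨t, rfl⟩; simp [lphi, dvec]
    · intro h
      refine ⟨y 0 - x 0, ?_⟩
      funext i; fin_cases i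
      · simp [dvec]
      · simp [dvec, lphi] at h ⊢; exact h
  | some s =>
    constructor
    · rintro ⟨t, rfl⟩; simp [lphi, dvec]; ring
    · intro h
      refine ⟨y 1 - x 1, ?_⟩
      funext i; fin_cases i
      · simp [dvec, lphi] at h ⊢; linear_combination h
      · simp [dvec]

lemma line_eq_of_mem {a v x : Fin 2 → F} (h : x ∈ line a v) : line a v = line x v := by
  obtain ⟨t0, rfl⟩ := h
  ext y
  constructor
  · rintro ⟨t, rfl⟩; exact ⟨t - t0, by module⟩
  · rintro ⟨t, rfl⟩; exact ⟨t0 + t, by module⟩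

lemma line_smul {x v : Fin 2 → F} {c : F} (hc : c ≠ 0) : line x (c • v) = line x v := by
  ext y
  constructor
  · rintro ⟨t, rfl⟩; exact ⟨t * c, by rw [mul_smul]⟩
  · rintro ⟨t, rfl⟩; exact ⟨t / c, by rw [smul_smul, div_mul_cancel₀ _ hc]⟩

lemma dvec_indep {d d' : Option F} (h : d ≠ d') {a b : F}
    (hab : a • dvec d = b • dvec d') : a = 0 ∧ b = 0 := by
  have h0 := congrFun hab 0
  have h1 := congrFun hab 1
  cases d with
  | none =>
    cases d' with
    | none => exact absurd rfl h
    | some s' =>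
      simp [dvec] at h0 h1
      refine ⟨?_, h1.symm⟩
      rw [← h1] at h0; simpa using h0
  | some s =>
    cases d' with
    | none =>
      simp [dvec] at h0 h1
      refine ⟨h1, ?_⟩
      rw [h1] at h0; simpa using h0.symm
    | some s' =>
      have hss : s ≠ s' := by intro e; exact h (by rw [e])
      simp [dvec] at h0 h1
      subst h1
      have : a * (s - s') = 0 := by linear_combination h0
      rcases mul_eq_zero.mp this with ha | hs
      · exact ⟨ha, ha⟩
      · exact absurd (sub_eq_zero.mp hs) hss

lemma normalize_line {x v : Fin 2 → F} (hv : v ≠ 0) :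
    ∃ d : Option F, line x v = line x (dvec d) := by
  by_cases h1 : v 1 = 0
  · have h0 : v 0 ≠ 0 := by
      intro h0; apply hv; funext i; fin_cases i
      · exact h0
      · exact h1
    refine ⟨none, ?_⟩
    have hv' : v = v 0 • dvec none := by
      funext i; fin_cases i <;> simp [dvec]
      exact h1
    rw [hv', line_smul h0]
  · refine ⟨some (v 0 / v 1), ?_⟩
    have hv' : v = v 1 • dvec (some (v 0 / v 1)) := by
      funext i; fin_cases i <;> simp [dvec]
      rw [mul_div_cancel₀ _ h1]
    calc line x v = line x (v 1 • dvec (some (v 0 / v 1))) := by rw [← hv']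
      _ = _ := line_smul h1

end helpers

open Finset

theorem stmt_14 (F : Type) [Field F] [Fintype F]
    (B : Set (Fin 2 → F)) (hB : IsNikodym B) :
    min (Fintype.card F ^ 2 - (Fintype.card F / 3) * (Fintype.card F - 1) - 2 * Fintype.card F)
      (3 * (Fintype.card F / 3) * (Fintype.card F - 1 - Fintype.card F / 3)) ≤ B.ncard := by
  classical
  set q := Fintype.card F with hq
  set k := q / 3 with hk
  by_cases hk0 : k = 0
  · calc min (q ^ 2 - k * (q - 1) - 2 * q) (3 * k * (q - 1 - k))
        ≤ 3 * k * (q - 1 - k) := min_le_right _ _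
      _ = 0 := by rw [hk0]; ring
      _ ≤ B.ncard := Nat.zero_le _
  have hk1 : 1 ≤ k := Nat.pos_of_ne_zero hk0
  have hq3 : 3 * k ≤ q := by
    have := Nat.div_mul_le_self q 3
    omega
  have hq2 : 3 ≤ q := by omega
  -- Finsets for B and its complement
  set Bf : Finset (Fin 2 → F) := univ.filter (· ∈ B) with hBf
  set Nf : Finset (Fin 2 → F) := univ.filter (· ∉ B) with hNf
  have hcard : Bf.card + Nf.card = q ^ 2 := by
    rw [hBf, hNf, Finset.card_filter_add_card_filter_not]
    simp [hq, Fintype.card_fun]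
  have hBcard : B.ncard = Bf.card := by
    rw [Set.ncard_eq_toFinset_card']
    congr 1
    ext x
    simp [hBf]
  -- choose tangent directions
  have key : ∀ x : Fin 2 → F, ∃ d : Option F, x ∉ B → line x (dvec d) ∩ Bᶜ = {x} := by
    intro x
    by_cases hx : x ∈ B
    · exact ⟨none, fun h => absurd hx h⟩
    · obtain ⟨a, v, hv, hl⟩ := hB x hx
      have hxm : x ∈ line a v := by
        have : x ∈ line a v ∩ Bᶜ := by rw [hl]; rfl
        exact this.1
      rw [line_eq_of_mem hxm] at hl
      obtain ⟨d, hd⟩ := normalize_line (x := x) hv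
      rw [hd] at hl
      exact ⟨d, fun _ => hl⟩
  choose D hD using key
  set Nd : Option F → Finset (Fin 2 → F) := fun d => Nf.filter (fun x => D x = d) with hNd
  have hpart : Nf.card = ∑ d : Option F, (Nd d).card :=
    Finset.card_eq_sum_card_fiberwise (fun x _ => mem_univ (D x))
  -- tangency property restated
  have htan : ∀ d, ∀ x ∈ Nd d, line x (dvec d) ∩ Bᶜ = {x} := by
    intro d x hx
    rw [hNd] at hx
    simp only [mem_filter, hNf, mem_univ, true_and] at hx
    rw [← hx.2]
    exact hD x hx.1
  have hNmem : ∀ d, ∀ x ∈ Nd d, x ∉ B := by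
    intro d x hx
    rw [hNd] at hx
    simp only [mem_filter, hNf, mem_univ, true_and] at hx
    exact hx.1
  -- injectivity of lphi d on Nd d
  have hinj : ∀ d, ∀ x ∈ Nd d, ∀ y ∈ Nd d, lphi d x = lphi d y → x = y := by
    intro d x hx y hy hphi
    have hy' : y ∈ line x (dvec d) ∩ Bᶜ := ⟨mem_line_dvec.mpr hphi.symm, hNmem d y hy⟩
    rw [htan d x hx] at hy'
    exact hy'.symm
  have hNdq : ∀ d, (Nd d).card ≤ q := by
    intro d
    have : (Nd d).card ≤ (univ : Finset F).card := by
      apply Finset.card_le_card_of_injOn (lphi d) (fun x _ => mem_univ _)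
      intro x hx y hy hxy
      exact hinj d x hx y hy hxy
    simpa [hq] using this
  -- the finset version of a line
  set lineF : (Fin 2 → F) → Option F → Finset (Fin 2 → F) :=
    fun x d => (univ : Finset F).image (fun t => x + t • dvec d) with hlineF
  have mem_lineF : ∀ x d y, y ∈ lineF x d ↔ y ∈ line x (dvec d) := by
    intro x d y
    simp only [hlineF, mem_image, mem_univ, true_and, line, Set.mem_setOf_eq]
    exact ⟨fun ⟨t, ht⟩ => ⟨t, ht.symm⟩, fun ⟨t, ht⟩ => ⟨t, ht.symm⟩⟩
  have card_lineF : ∀ x d, (lineF x d).card = q := by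
    intro x d
    rw [hlineF]
    rw [Finset.card_image_of_injective _ ?_, Finset.card_univ, hq]
    intro t s hts
    have : t • dvec d = s • dvec d := by
      have := hts
      simpa using add_left_cancel this
    have := sub_eq_zero.mpr this
    rw [← sub_smul] at this
    rcases smul_eq_zero.mp this with h | h
    · exact sub_eq_zero.mp h
    · exact absurd h (dvec_ne_zero d)
  have self_mem_lineF : ∀ x d, x ∈ lineF x d := by
    intro x d
    rw [mem_lineF]
    exact ⟨0, by simp⟩
  have hlineB : ∀ d, ∀ x ∈ Nd d, ∀ y ∈ lineF x d, y ≠ x → y ∈ Bf := by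
    intro d x hx y hy hyx
    rw [hBf]
    simp only [mem_filter, mem_univ, true_and]
    by_contra hyB
    have : y ∈ line x (dvec d) ∩ Bᶜ := ⟨(mem_lineF x d y).mp hy, hyB⟩
    rw [htan d x hx] at this
    exact hyx this
  set R : Finset (Option F) := univ.filter (fun d => k ≤ (Nd d).card) with hR
  by_cases hR3 : 3 ≤ R.card
  · -- three rich directions: big union of tangent lines inside B
    have key1 : ∀ d, ∀ S ⊆ Nd d, S.card = k →
        (S.biUnion (fun x => lineF x d \ {x})).card = k * (q - 1) ∧
        (S.biUnion (fun x => lineF x d \ {x})) ⊆ Bf := by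
      intro d S hS hSc
      constructor
      · rw [Finset.card_biUnion]
        · have : ∀ x ∈ S, (lineF x d \ {x}).card = q - 1 := by
            intro x hx
            rw [Finset.card_sdiff_of_subset (by simpa using self_mem_lineF x d)]
            rw [card_lineF, Finset.card_singleton]
          rw [Finset.sum_congr rfl this, Finset.sum_const, hSc, smul_eq_mul]
        · intro x hx y hy hxy
          rw [Function.onFun, Finset.disjoint_left]
          intro z hzx hzy
          apply hxy
          apply hinj d x (hS hx) y (hS hy)
          have h1 : lphi d z = lphi d x := mem_line_dvec.mp ((mem_lineF x d z).mp (Finset.mem_sdiff.mp hzx).1)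
          have h2 : lphi d z = lphi d y := mem_line_dvec.mp ((mem_lineF y d z).mp (Finset.mem_sdiff.mp hzy).1)
          rw [← h1, h2]
      · intro z hz
        obtain ⟨x, hx, hzx⟩ := Finset.mem_biUnion.mp hz
        obtain ⟨hz1, hz2⟩ := Finset.mem_sdiff.mp hzx
        exact hlineB d x (hS hx) z hz1 (by simpa using hz2)
    have key2 : ∀ d d', d ≠ d' → ∀ S ⊆ Nd d, ∀ S' ⊆ Nd d', S.card = k → S'.card = k →
        ((S.biUnion (fun x => lineF x d \ {x})) ∩ (S'.biUnion (fun x => lineF x d' \ {x}))).card ≤ k * k := by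
      intro d d' hdd' S hS S' hS' hSc hSc'
      have hsub : (S.biUnion (fun x => lineF x d \ {x})) ∩ (S'.biUnion (fun x => lineF x d' \ {x})) ⊆
          S.biUnion (fun x => (lineF x d) ∩ (S'.biUnion (fun y => lineF y d' \ {y}))) := by
        intro z hz
        obtain ⟨hz1, hz2⟩ := Finset.mem_inter.mp hz
        obtain ⟨x, hx, hzx⟩ := Finset.mem_biUnion.mp hz1
        exact Finset.mem_biUnion.mpr ⟨x, hx, Finset.mem_inter.mpr ⟨(Finset.mem_sdiff.mp hzx).1, hz2⟩⟩
      calc ((S.biUnion (fun x => lineF x d \ {x})) ∩ (S'.biUnion (fun x => lineF x d' \ {x}))).card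
          ≤ (S.biUnion (fun x => (lineF x d) ∩ (S'.biUnion (fun y => lineF y d' \ {y})))).card :=
            Finset.card_le_card hsub
        _ ≤ ∑ x ∈ S, ((lineF x d) ∩ (S'.biUnion (fun y => lineF y d' \ {y}))).card :=
            Finset.card_biUnion_le
        _ ≤ ∑ _x ∈ S, k := by
            apply Finset.sum_le_sum
            intro x _
            have hsub2 : (lineF x d) ∩ (S'.biUnion (fun y => lineF y d' \ {y})) ⊆
                S'.biUnion (fun y => (lineF x d) ∩ (lineF y d')) := by
              intro z hz
              obtain ⟨hz1, hz2⟩ := Finset.mem_inter.mp hz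
              obtain ⟨y, hy, hzy⟩ := Finset.mem_biUnion.mp hz2
              exact Finset.mem_biUnion.mpr ⟨y, hy, Finset.mem_inter.mpr ⟨hz1, (Finset.mem_sdiff.mp hzy).1⟩⟩
            calc ((lineF x d) ∩ (S'.biUnion (fun y => lineF y d' \ {y}))).card
                ≤ (S'.biUnion (fun y => (lineF x d) ∩ (lineF y d'))).card := Finset.card_le_card hsub2
              _ ≤ ∑ y ∈ S', ((lineF x d) ∩ (lineF y d')).card := Finset.card_biUnion_le
              _ ≤ ∑ _y ∈ S', 1 := by
                  apply Finset.sum_le_sum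
                  intro y _
                  apply Finset.card_le_one.mpr
                  intro z hz w hw
                  obtain ⟨hz1, hz2⟩ := Finset.mem_inter.mp hz
                  obtain ⟨hw1, hw2⟩ := Finset.mem_inter.mp hw
                  obtain ⟨t, ht⟩ := (mem_lineF x d z).mp hz1
                  obtain ⟨t', ht'⟩ := (mem_lineF x d w).mp hw1
                  obtain ⟨u, hu⟩ := (mem_lineF y d' z).mp hz2
                  obtain ⟨u', hu'⟩ := (mem_lineF y d' w).mp hw2
                  have e : (t - t') • dvec d = (u - u') • dvec d' := by
                    calc (t - t') • dvec d = (x + t • dvec d) - (x + t' • dvec d) := by module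
                      _ = (y + u • dvec d') - (y + u' • dvec d') := by rw [← ht, ← ht', ← hu, ← hu']
                      _ = (u - u') • dvec d' := by module
                  obtain ⟨htt, -⟩ := dvec_indep hdd' e
                  have : t = t' := sub_eq_zero.mp htt
                  rw [ht, ht', this]
              _ = k := by rw [Finset.sum_const, hSc', smul_eq_mul, mul_one]
        _ = k * k := by rw [Finset.sum_const, hSc, smul_eq_mul]
    -- extract three distinct rich directions
    obtain ⟨t3, ht3R, ht3c⟩ := Finset.exists_subset_card_eq hR3
    obtain ⟨d1, d2, d3, h12, h13, h23, ht3⟩ := Finset.card_eq_three.mp ht3c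
    have hd1 : k ≤ (Nd d1).card := by
      have : d1 ∈ R := ht3R (by rw [ht3]; simp)
      simpa [hR] using this
    have hd2 : k ≤ (Nd d2).card := by
      have : d2 ∈ R := ht3R (by rw [ht3]; simp)
      simpa [hR] using this
    have hd3 : k ≤ (Nd d3).card := by
      have : d3 ∈ R := ht3R (by rw [ht3]; simp)
      simpa [hR] using this
    obtain ⟨S1, hS1, hS1c⟩ := Finset.exists_subset_card_eq hd1
    obtain ⟨S2, hS2, hS2c⟩ := Finset.exists_subset_card_eq hd2
    obtain ⟨S3, hS3, hS3c⟩ := Finset.exists_subset_card_eq hd3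
    set T1 := S1.biUnion (fun x => lineF x d1 \ {x}) with hT1
    set T2 := S2.biUnion (fun x => lineF x d2 \ {x}) with hT2
    set T3 := S3.biUnion (fun x => lineF x d3 \ {x}) with hT3
    obtain ⟨hT1c, hT1s⟩ := key1 d1 S1 hS1 hS1c
    obtain ⟨hT2c, hT2s⟩ := key1 d2 S2 hS2 hS2c
    obtain ⟨hT3c, hT3s⟩ := key1 d3 S3 hS3 hS3c
    have p12 := key2 d1 d2 h12 S1 hS1 S2 hS2 hS1c hS2c
    have p13 := key2 d1 d3 h13 S1 hS1 S3 hS3 hS1c hS3c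
    have p23 := key2 d2 d3 h23 S2 hS2 S3 hS3 hS2c hS3c
    have hucard : ((T1 ∪ T2) ∪ T3).card ≤ Bf.card :=
      Finset.card_le_card (Finset.union_subset (Finset.union_subset hT1s hT2s) hT3s)
    have e1 := Finset.card_union_add_card_inter T1 T2
    have e2 := Finset.card_union_add_card_inter (T1 ∪ T2) T3
    have e3 : ((T1 ∪ T2) ∩ T3).card ≤ (T1 ∩ T3).card + (T2 ∩ T3).card := by
      calc ((T1 ∪ T2) ∩ T3).card = ((T1 ∩ T3) ∪ (T2 ∩ T3)).card := by
            rw [Finset.union_inter_distrib_right]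
        _ ≤ _ := Finset.card_union_le _ _
    have heq : k * (q - 1 - k) + k * k = k * (q - 1) := by
      rw [← Nat.left_distrib]
      congr 1
      omega
    calc min (q ^ 2 - k * (q - 1) - 2 * q) (3 * k * (q - 1 - k))
        ≤ 3 * k * (q - 1 - k) := min_le_right _ _
      _ ≤ Bf.card := by
          rw [mul_assoc]
          linarith [hT1c, hT2c, hT3c, p12, p13, p23, hucard, e1, e2, e3, heq]
      _ = B.ncard := hBcard.symm
  · -- at most two rich directions
    have hRle : R.card ≤ 2 := by omega
    have hsplit : ∑ d : Option F, (Nd d).card =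
        ∑ d ∈ R, (Nd d).card + ∑ d ∈ univ.filter (fun d => ¬ k ≤ (Nd d).card), (Nd d).card := by
      rw [hR, Finset.sum_filter_add_sum_filter_not]
    have h1 : ∑ d ∈ R, (Nd d).card ≤ 2 * q := by
      calc ∑ d ∈ R, (Nd d).card ≤ R.card * q := by
            have := Finset.sum_le_card_nsmul R (fun d => (Nd d).card) q (fun d _ => hNdq d)
            simpa using this
        _ ≤ 2 * q := Nat.mul_le_mul_right q hRle
    have h2 : ∑ d ∈ univ.filter (fun d => ¬ k ≤ (Nd d).card), (Nd d).card ≤ (q + 1) * (k - 1) := by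
      calc ∑ d ∈ univ.filter (fun d => ¬ k ≤ (Nd d).card), (Nd d).card
          ≤ (univ.filter (fun d => ¬ k ≤ (Nd d).card)).card * (k - 1) := by
            have := Finset.sum_le_card_nsmul (univ.filter (fun d => ¬ k ≤ (Nd d).card))
              (fun d => (Nd d).card) (k - 1) ?_
            · simpa using this
            · intro d hd
              simp only [Finset.mem_filter] at hd
              show (Nd d).card ≤ k - 1
              omega
        _ ≤ (q + 1) * (k - 1) := by
            apply Nat.mul_le_mul_right
            calc (univ.filter (fun d => ¬ k ≤ (Nd d).card)).card
                ≤ (univ : Finset (Option F)).card := Finset.card_filter_le _ _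
              _ = q + 1 := by simp [hq]
    have haux : (q + 1) * (k - 1) ≤ k * (q - 1) := by
      have hq3' : (3 : ℤ) * k ≤ q := by exact_mod_cast hq3
      have hk1' : (1 : ℤ) ≤ k := by exact_mod_cast hk1
      zify [hk1, (by omega : 1 ≤ q)]
      nlinarith [hq3', hk1']
    have hNbound : Nf.card ≤ k * (q - 1) + 2 * q := by
      calc Nf.card = ∑ d ∈ R, (Nd d).card + ∑ d ∈ univ.filter (fun d => ¬ k ≤ (Nd d).card), (Nd d).card := by
            rw [hpart, hsplit]
        _ ≤ 2 * q + k * (q - 1) := Nat.add_le_add h1 (le_trans h2 haux)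
        _ = k * (q - 1) + 2 * q := by ring
    calc min (q ^ 2 - k * (q - 1) - 2 * q) (3 * k * (q - 1 - k))
        ≤ q ^ 2 - k * (q - 1) - 2 * q := min_le_left _ _
      _ = q ^ 2 - (k * (q - 1) + 2 * q) := by rw [Nat.sub_sub]
      _ ≤ q ^ 2 - Nf.card := Nat.sub_le_sub_left hNbound _
      _ = Bf.card := by rw [← hcard, Nat.add_sub_cancel]
      _ = B.ncard := hBcard.symm
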